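/- If κ₁ satisfies ε₁-differential privacy and κ₂ satisfies ε₂-differential privacy, and they are run independently on the same dataset, then the joint mechanism D ↦ (κ₁(D), κ₂(D)) satisfies (ε₁ + ε₂)-differential privacy (sequential composition). -/

import Mathlib

open MeasureTheory

def DP {D Ω : Type*} [MeasurableSpace Ω] (neighbor : D → D → Prop)
    (κ : D → Measure Ω) (ε : ℝ) : Prop :=
  ∀ d₁ d₂, neighbor d₁ d₂ → ∀ S : Set Ω, MeasurableSet S →
    κ d₁ S ≤ ENNReal.ofReal (Real.exp ε) * κ d₂ S

/-- Sequential composition: the joint mechanism of two independent mechanisms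
(the product of the two output distributions) satisfies (ε₁+ε₂)-DP. -/
theorem dp_sequential_composition {D Ω₁ Ω₂ : Type*}
    [MeasurableSpace Ω₁] [MeasurableSpace Ω₂]
    (neighbor : D → D → Prop)
    (κ₁ : D → Measure Ω₁) (κ₂ : D → Measure Ω₂) (ε₁ ε₂ : ℝ)
    (hprob₁ : ∀ d, IsProbabilityMeasure (κ₁ d))
    (hprob₂ : ∀ d, IsProbabilityMeasure (κ₂ d))
    (h₁ : DP neighbor κ₁ ε₁) (h₂ : DP neighbor κ₂ ε₂) :
    DP neighbor (fun d => (κ₁ d).prod (κ₂ d)) (ε₁ + ε₂) := by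
  intro d₁ d₂ hn S hS
  have := hprob₁ d₁; have := hprob₁ d₂; have := hprob₂ d₁; have := hprob₂ d₂
  have hslice : ∀ x : Ω₁, MeasurableSet (Prod.mk x ⁻¹' S) := fun x =>
    measurable_prodMk_left hS
  calc ((κ₁ d₁).prod (κ₂ d₁)) S
      = ∫⁻ x, κ₂ d₁ (Prod.mk x ⁻¹' S) ∂(κ₁ d₁) := Measure.prod_apply hS
    _ ≤ ∫⁻ x, ENNReal.ofReal (Real.exp ε₂) * κ₂ d₂ (Prod.mk x ⁻¹' S) ∂(κ₁ d₁) :=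
        lintegral_mono fun x => h₂ d₁ d₂ hn _ (hslice x)
    _ = ENNReal.ofReal (Real.exp ε₂) * ∫⁻ x, κ₂ d₂ (Prod.mk x ⁻¹' S) ∂(κ₁ d₁) :=
        lintegral_const_mul' _ _ ENNReal.ofReal_ne_top
    _ ≤ ENNReal.ofReal (Real.exp ε₂) *
        ∫⁻ x, κ₂ d₂ (Prod.mk x ⁻¹' S) ∂(ENNReal.ofReal (Real.exp ε₁) • κ₁ d₂) := by
        gcongr
        exact (Measure.le_iff.2 fun s hs => by
          simpa [Measure.smul_apply, smul_eq_mul] using h₁ d₁ d₂ hn s hs)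
    _ = ENNReal.ofReal (Real.exp ε₂) * (ENNReal.ofReal (Real.exp ε₁) *
        ∫⁻ x, κ₂ d₂ (Prod.mk x ⁻¹' S) ∂(κ₁ d₂)) := by
        rw [lintegral_smul_measure, smul_eq_mul]
    _ = ENNReal.ofReal (Real.exp (ε₁ + ε₂)) * ((κ₁ d₂).prod (κ₂ d₂)) S := by
        rw [Measure.prod_apply hS, Real.exp_add,
          ENNReal.ofReal_mul (Real.exp_nonneg _)]
        ring
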